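/- In the quantum two-photon algebra U_λ(h₆) with relations [N,A₊] = (e^{λA₊}−1)/λ (and A₊ commuting with itself), the coproduct values Δ(A₊) = 1⊗A₊ + A₊⊗1 and Δ(N) = 1⊗N + N⊗e^{λA₊} satisfy the same relation: [Δ(N), Δ(A₊)] = (e^{λΔ(A₊)}−1)/λ. -/
import Mathlib


open TensorProduct

/-- In `U_λ(h₆)`, with `E = e^{λA₊}` (so that `E` commutes with `A₊`) and the
defining relation `[N,A₊] = (e^{λA₊}−1)/λ`, the coproducts
`Δ(A₊) = 1⊗A₊ + A₊⊗1` and `Δ(N) = 1⊗N + N⊗e^{λA₊}` satisfy the same relation: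
`[Δ(N), Δ(A₊)] = (e^{λΔ(A₊)}−1)/λ`, where
`e^{λΔ(A₊)} = e^{λA₊}⊗e^{λA₊}` since `A₊⊗1` and `1⊗A₊` commute. -/
theorem coproduct_preserves_NAp_relation
    (A : Type*) [Ring A] [Algebra ℂ A] (lam : ℂ) (N Ap E : A)
    (hE : Commute Ap E)
    (hrel : ⁅N, Ap⁆ = lam⁻¹ • (E - 1)) :
    ⁅(1 : A) ⊗ₜ[ℂ] N + N ⊗ₜ[ℂ] E, (1 : A) ⊗ₜ[ℂ] Ap + Ap ⊗ₜ[ℂ] (1 : A)⁆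
      = lam⁻¹ • (E ⊗ₜ[ℂ] E - (1 : A) ⊗ₜ[ℂ] (1 : A)) := by
  have hNA : N * Ap = Ap * N + lam⁻¹ • (E - 1) := by
    have := hrel
    rw [Ring.lie_def, sub_eq_iff_eq_add'] at this
    linear_combination (norm := abel) this
  rw [Ring.lie_def]
  simp only [mul_add, add_mul, Algebra.TensorProduct.tmul_mul_tmul, one_mul, mul_one,
    hNA, hE.eq, smul_sub, add_tmul, sub_tmul, tmul_add, tmul_sub, ← tmul_smul, smul_tmul]
  abel
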